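/- Let n ≥ 3. There is no real number ρ ≥ 1 together with a continuous map A : X → ℝ/πℤ, where X ⊆ (ℝ²)ⁿ is the subspace of configurations p = (p₁,…,pₙ) for which not all pᵢ are equal, such that width(A(p), p) ≤ ρ · inf_{θ ∈ ℝ} width(θ, p) holds for every p ∈ X. Here width(θ, p) = max_{i,j} |⟨pᵢ − pⱼ, (−sin θ, cos θ)⟩|, which is π-periodic in θ and hence well-defined for an orientation in ℝ/πℤ. -/

import Mathlib

open Real
open scoped RealInnerProductSpace

noncomputable section

/-- The point of `ℝ²` with coordinates `a`, `b`. -/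
def pt (a b : ℝ) : EuclideanSpace ℝ (Fin 2) :=
  (WithLp.equiv 2 (Fin 2 → ℝ)).symm ![a, b]

/-- `width θ p` is the width of the thinnest strip with orientation `θ` covering the
configuration `p`, i.e. `max_{i,j} |⟨pᵢ − pⱼ, (−sin θ, cos θ)⟩|`. -/
def width {n : ℕ} (θ : ℝ) (p : Fin n → EuclideanSpace ℝ (Fin 2)) : ℝ :=
  ⨆ ij : Fin n × Fin n, |⟪p ij.1 - p ij.2, pt (-Real.sin θ) (Real.cos θ)⟫|

/-! ### Auxiliary material: the covering `ℝ → ℝ/πℤ` and explicit lifting theory -/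

instance stmtAux.factPiPos : Fact (0 < Real.pi) := ⟨Real.pi_pos⟩

namespace stmtAux

open Set

/-- local section of the covering `ℝ → ℝ/πℤ` with values in `[a, a+π)`. -/
def sec (a : ℝ) (x : AddCircle π) : ℝ := (AddCircle.equivIco π a x : ℝ)

lemma coe_sec (a : ℝ) (x : AddCircle π) : ((sec a x : ℝ) : AddCircle π) = x :=
  (AddCircle.equivIco π a).symm_apply_apply x

lemma sec_mem (a : ℝ) (x : AddCircle π) : sec a x ∈ Ico a (a + π) :=
  (AddCircle.equivIco π a x).2

lemma continuousAt_sec (a : ℝ) {x : AddCircle π} (hx : x ≠ (a : AddCircle π)) :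
    ContinuousAt (sec a) x :=
  continuousAt_subtype_val.comp (AddCircle.continuousAt_equivIco π a hx)

lemma half_pi_ne_zero : ((π/2 : ℝ) : AddCircle π) ≠ 0 := by
  intro h
  obtain ⟨k, hk⟩ := (AddCircle.coe_eq_zero_iff π).mp h
  rcases lt_trichotomy k 0 with h' | h' | h'
  · have : (k:ℝ) * π ≤ -1 * π := by
      apply mul_le_mul_of_nonneg_right _ Real.pi_pos.le
      have : k ≤ -1 := by omega
      exact_mod_cast this
    rw [zsmul_eq_mul] at hk; nlinarith [Real.pi_pos]
  · subst h'; simp at hk; linarith [Real.pi_pos]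
  · have : (1:ℝ) * π ≤ (k:ℝ) * π := by
      apply mul_le_mul_of_nonneg_right _ Real.pi_pos.le
      have : (1:ℤ) ≤ k := by omega
      exact_mod_cast this
    rw [zsmul_eq_mul] at hk; nlinarith [Real.pi_pos]

lemma neg_half_pi_eq : ((-(π/2) : ℝ) : AddCircle π) = ((π/2 : ℝ) : AddCircle π) := by
  have : ((-(π/2) : ℝ) : AddCircle π) - ((π/2 : ℝ) : AddCircle π) = ((-π : ℝ) : AddCircle π) := by
    rw [← AddCircle.coe_sub]; ring_nf
  have h2 : ((-π : ℝ) : AddCircle π) = 0 := by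
    rw [AddCircle.coe_eq_zero_iff]; exact ⟨-1, by simp⟩
  rw [h2, sub_eq_zero] at this
  exact this

lemma int_zero_of_small {d : ℝ} (k : ℤ) (hk : k • π = d) (hd : |d| < π) : d = 0 := by
  rcases eq_or_ne k 0 with h | h
  · subst h; simpa using hk.symm
  · exfalso
    have h1 : (1:ℝ) ≤ |(k:ℝ)| := by exact_mod_cast Int.one_le_abs h
    rw [zsmul_eq_mul] at hk
    have : |(k:ℝ) * π| = |(k:ℝ)| * π := by rw [abs_mul, abs_of_pos Real.pi_pos]
    rw [hk] at this
    nlinarith [Real.pi_pos]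

lemma coe_eq_of_sin_eq_zero {t θ : ℝ} (h : Real.sin (t - θ) = 0) :
    ((t : ℝ) : AddCircle π) = ((θ : ℝ) : AddCircle π) := by
  obtain ⟨k, hk⟩ := Real.sin_eq_zero_iff.mp h
  have : ((t - θ : ℝ) : AddCircle π) = 0 := by
    rw [AddCircle.coe_eq_zero_iff]; exact ⟨k, by rw [zsmul_eq_mul]; exact hk⟩
  rw [AddCircle.coe_sub, sub_eq_zero] at this; exact this

/-- two continuous lifts of the same map differ by a constant on a preconnected set -/
lemma lift_rigid {l₁ l₂ : ℝ → ℝ} {s : Set ℝ} (hs : IsPreconnected s)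
    (h₁ : ContinuousOn l₁ s) (h₂ : ContinuousOn l₂ s)
    (h : ∀ t ∈ s, ((l₁ t : ℝ) : AddCircle π) = ((l₂ t : ℝ) : AddCircle π))
    {t₀ t₁ : ℝ} (ht₀ : t₀ ∈ s) (ht₁ : t₁ ∈ s) :
    l₁ t₀ - l₂ t₀ = l₁ t₁ - l₂ t₁ := by
  set d : ℝ → ℝ := fun t => l₁ t - l₂ t with hd
  have hdc : ContinuousOn d s := h₁.sub h₂
  have himg : IsPreconnected (d '' s) := hs.image d hdc
  have hmem : ∀ x ∈ d '' s, ((x : ℝ) : AddCircle π) = 0 := by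
    rintro x ⟨t, ht, rfl⟩
    simp only [hd]
    rw [AddCircle.coe_sub, sub_eq_zero]
    exact h t ht
  have key : ∀ x ∈ d '' s, ∀ y ∈ d '' s, x ≤ y → x = y := by
    intro x hx y hy hxy
    by_contra hne
    have hlt : x < y := lt_of_le_of_ne hxy hne
    have hyx : ((y - x : ℝ) : AddCircle π) = 0 := by
      rw [AddCircle.coe_sub, hmem x hx, hmem y hy, sub_zero]
    obtain ⟨k, hk⟩ := (AddCircle.coe_eq_zero_iff π).mp hyx
    have hk1 : (1:ℤ) ≤ k := by
      by_contra hk1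
      push_neg at hk1
      have hk0 : k ≤ 0 := by omega
      have : (k:ℝ) * π ≤ 0 :=
        mul_nonpos_of_nonpos_of_nonneg (by exact_mod_cast hk0) Real.pi_pos.le
      rw [zsmul_eq_mul] at hk
      linarith
    have hge : π ≤ y - x := by
      rw [zsmul_eq_mul] at hk
      have : (1:ℝ) * π ≤ (k:ℝ) * π :=
        mul_le_mul_of_nonneg_right (by exact_mod_cast hk1) Real.pi_pos.le
      linarith
    have hmid : x + π/2 ∈ d '' s := by
      apply himg.Icc_subset hx hy
      constructor <;> [linarith [Real.pi_pos]; linarith]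
    have := hmem _ hmid
    rw [AddCircle.coe_add, hmem x hx, zero_add] at this
    exact half_pi_ne_zero this
  have h₁' := key _ ⟨t₀, ht₀, rfl⟩ _ ⟨t₁, ht₁, rfl⟩
  have h₂' := key _ ⟨t₁, ht₁, rfl⟩ _ ⟨t₀, ht₀, rfl⟩
  rcases le_total (d t₀) (d t₁) with hle | hle
  · exact h₁' hle
  · exact (h₂' hle).symm

/-- path lifting for the covering `ℝ → ℝ/πℤ` -/
lemma exists_lift (h : ℝ → AddCircle π) (hh : Continuous h) (a b : ℝ) (hab : a ≤ b)
    (r₀ : ℝ) (hr₀ : ((r₀ : ℝ) : AddCircle π) = h a) :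
    ∃ l : ℝ → ℝ, Continuous l ∧ l a = r₀ ∧ ∀ t ∈ Icc a b, ((l t : ℝ) : AddCircle π) = h t := by
  set S : Set ℝ := {c | c ∈ Icc a b ∧ ∃ l : ℝ → ℝ, Continuous l ∧ l a = r₀ ∧
    ∀ t ∈ Icc a c, ((l t : ℝ) : AddCircle π) = h t} with hS
  have haS : a ∈ S := by
    refine ⟨⟨le_refl a, hab⟩, fun _ => r₀, continuous_const, rfl, ?_⟩
    intro t ht
    have : t = a := le_antisymm ht.2 ht.1
    subst this; exact hr₀
  have hSne : S.Nonempty := ⟨a, haS⟩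
  have hbdd : BddAbove S := ⟨b, fun c hc => hc.1.2⟩
  set c₀ : ℝ := sSup S with hc₀
  have hac₀ : a ≤ c₀ := le_csSup hbdd haS
  have hc₀b : c₀ ≤ b := csSup_le hSne fun c hc => hc.1.2
  set r : ℝ := sec 0 (h c₀) with hr
  have hrc : ((r : ℝ) : AddCircle π) = h c₀ := coe_sec 0 (h c₀)
  have hne : h c₀ ≠ (((r + π/2 : ℝ)) : AddCircle π) := by
    rw [← hrc, AddCircle.coe_add]
    intro hcon
    exact half_pi_ne_zero (by rwa [left_eq_add] at hcon)
  set V : Set ℝ := h ⁻¹' {(((r + π/2 : ℝ)) : AddCircle π)}ᶜ with hV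
  have hVopen : IsOpen V := (isOpen_compl_singleton).preimage hh
  have hc₀V : c₀ ∈ V := hne
  obtain ⟨ε, hε, hball⟩ := Metric.isOpen_iff.mp hVopen c₀ hc₀V
  obtain ⟨c, hcS, hcc⟩ : ∃ c ∈ S, c₀ - ε < c := by
    rcases eq_or_lt_of_le hac₀ with heq | hlt
    · exact ⟨a, haS, by rw [← heq]; linarith⟩
    · exact exists_lt_of_lt_csSup hSne (by linarith)
  have hcle : c ≤ c₀ := le_csSup hbdd hcS
  obtain ⟨⟨hac, hcb⟩, l, hl, hla, hlift⟩ := hcS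
  have hsame : (((r - π/2 : ℝ)) : AddCircle π) = (((r + π/2 : ℝ)) : AddCircle π) := by
    have : ((((r + π/2) - (r - π/2) : ℝ)) : AddCircle π) = 0 := by
      have : ((r + π/2) - (r - π/2) : ℝ) = π := by ring
      rw [this]; exact AddCircle.coe_period π
    rw [AddCircle.coe_sub, sub_eq_zero] at this
    exact this.symm
  set σ : AddCircle π → ℝ := sec (r - π/2) with hσ
  set cl : ℝ → ℝ := fun t => max c (min t (c₀ + ε/2)) with hcl
  have hclcont : Continuous cl := continuous_const.max (continuous_id.min continuous_const)
  have hclmem : ∀ t, cl t ∈ Metric.ball c₀ ε := by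
    intro t
    rw [Metric.mem_ball, Real.dist_eq, abs_lt]
    constructor
    · have : c ≤ cl t := le_max_left _ _
      linarith
    · have h1 : cl t ≤ max c (c₀ + ε/2) := max_le_max (le_refl c) (min_le_right _ _)
      have h2 : max c (c₀ + ε/2) ≤ c₀ + ε/2 := max_le (by linarith) (le_refl _)
      linarith
  have hσcont : Continuous fun t => σ (h (cl t)) := by
    rw [continuous_iff_continuousAt]
    intro t
    have hx : h (cl t) ≠ ((r - π/2 : ℝ) : AddCircle π) := by
      rw [hsame]; exact hball (hclmem t)
    have : ContinuousAt (σ ∘ h ∘ cl) t :=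
      ContinuousAt.comp (continuousAt_sec _ hx)
        (ContinuousAt.comp hh.continuousAt hclcont.continuousAt)
    exact this
  set k : ℝ := l c - σ (h c) with hk
  have hck : (((k : ℝ)) : AddCircle π) = 0 := by
    rw [hk, AddCircle.coe_sub, sub_eq_zero, hlift c ⟨hac, le_refl c⟩, coe_sec]
  set l' : ℝ → ℝ := fun t => if t ≤ c then l t else σ (h (cl t)) + k with hl'
  have hclc : cl c = c := by
    rw [hcl]
    simp only
    rw [min_eq_left (by linarith), max_self]
  have hl'cont : Continuous l' := by
    apply Continuous.if_le hl (hσcont.add continuous_const) continuous_id continuous_const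
    intro t ht
    simp only [id_eq] at ht
    subst ht
    simp only [Pi.add_apply, hclc, hk]; ring
  have hl'a : l' a = r₀ := by simp only [hl']; rw [if_pos hac]; exact hla
  have hl'lift : ∀ t ∈ Icc a (min b (c₀ + ε/2)), ((l' t : ℝ) : AddCircle π) = h t := by
    intro t ⟨hta, htb⟩
    simp only [hl']
    by_cases htc : t ≤ c
    · rw [if_pos htc]; exact hlift t ⟨hta, htc⟩
    · rw [if_neg htc]
      push_neg at htc
      have hcl_t : cl t = t := by
        rw [hcl]; simp only
        rw [min_eq_left (le_trans htb (min_le_right _ _)), max_eq_right htc.le]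
      rw [hcl_t, AddCircle.coe_add, hck, add_zero, coe_sec]
  have hmemS : min b (c₀ + ε/2) ∈ S := by
    refine ⟨⟨le_min hab (by linarith), min_le_left _ _⟩, l', hl'cont, hl'a, hl'lift⟩
  have hminle : min b (c₀ + ε/2) ≤ c₀ := le_csSup hbdd hmemS
  have hc₀eq : c₀ = b := by
    by_contra hne'
    have h1 : c₀ < b := lt_of_le_of_ne hc₀b hne'
    have h2 : min b (c₀ + ε/2) > c₀ := lt_min h1 (by linarith)
    linarith
  obtain ⟨_, l'', h1, h2, h3⟩ := hmemS
  refine ⟨l'', h1, h2, ?_⟩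
  intro t ht
  apply h3
  refine ⟨ht.1, ?_⟩
  rw [hc₀eq] at *
  exact le_trans ht.2 (le_min (le_refl b) (by linarith))

/-! ### geometry of `pt` -/

lemma inner_pt (a b c d : ℝ) : ⟪pt a b, pt c d⟫ = a * c + b * d := by
  rw [PiLp.inner_apply, Fin.sum_univ_two]
  simp [pt, RCLike.inner_apply]; ring

lemma pt_eq_smul (a b : ℝ) : pt a b = a • pt 1 0 + b • pt 0 1 := by
  ext i
  fin_cases i <;> simp [pt]

/-- the unit vector with angle `t` -/
def uvec (t : ℝ) : EuclideanSpace ℝ (Fin 2) := pt (Real.cos t) (Real.sin t)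

lemma continuous_uvec : Continuous uvec := by
  have : uvec = fun t => Real.cos t • pt 1 0 + Real.sin t • pt 0 1 := by
    funext t; rw [uvec, pt_eq_smul]
  rw [this]
  exact (Real.continuous_cos.smul continuous_const).add
    (Real.continuous_sin.smul continuous_const)

lemma uvec_ne_zero (t : ℝ) : uvec t ≠ 0 := by
  intro h
  have h0 : Real.cos t = 0 := by
    have := congrArg (· 0) h; simpa [uvec, pt] using this
  have h1 : Real.sin t = 0 := by
    have := congrArg (· 1) h; simpa [uvec, pt] using this
  nlinarith [Real.sin_sq_add_cos_sq t]

lemma uvec_two_pi : uvec (2*π) = uvec 0 := by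
  rw [uvec, uvec, Real.cos_two_pi, Real.sin_two_pi, Real.cos_zero, Real.sin_zero]

lemma inner_uvec (t θ : ℝ) :
    ⟪uvec t, pt (-Real.sin θ) (Real.cos θ)⟫ = Real.sin (t - θ) := by
  rw [uvec, inner_pt, Real.sin_sub]; ring

lemma w_ne_zero : pt 0 1 ≠ 0 := by
  intro h
  have := congrArg (· 1) h
  simp [pt] at this

/-- the clamp function to `[0,1]` -/
def clmp (x : ℝ) : ℝ := max 0 (min 1 x)

lemma continuous_clmp : Continuous clmp :=
  continuous_const.max (continuous_const.min continuous_id)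

lemma clmp_le_one (x : ℝ) : clmp x ≤ 1 := max_le (by norm_num) (min_le_left _ _)

lemma clmp_of_nonpos {x : ℝ} (h : x ≤ 0) : clmp x = 0 := by
  rw [clmp, min_eq_right (h.trans zero_le_one), max_eq_left h]

lemma clmp_of_one_le {x : ℝ} (h : 1 ≤ x) : clmp x = 1 := by
  rw [clmp, min_eq_left h]; norm_num

lemma one_le_of_clmp_eq_one {x : ℝ} (h : clmp x = 1) : 1 ≤ x := by
  by_contra hx
  push_neg at hx
  rcases le_total x 0 with h0 | h0
  · rw [clmp_of_nonpos h0] at h; norm_num at h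
  · rw [clmp, min_eq_right hx.le, max_eq_right h0] at h
    rw [h] at hx; exact lt_irrefl 1 hx

end stmtAux

open stmtAux Set

/-- There is no stateless topologically stable algorithm with bounded approximation
ratio for the thinnest covering strip: no `ρ ≥ 1` and continuous map `A` from valid
configurations to orientations `ℝ/πℤ` such that the strip of orientation `A p` is
always within factor `ρ` of optimal. -/
theorem stmt_1 (n : ℕ) (hn : 3 ≤ n) :
    ¬ ∃ ρ : ℝ, 1 ≤ ρ ∧
      ∃ A : {p : Fin n → EuclideanSpace ℝ (Fin 2) // ¬ ∀ i j, p i = p j} → AddCircle π,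
        Continuous A ∧
        ∀ p : {p : Fin n → EuclideanSpace ℝ (Fin 2) // ¬ ∀ i j, p i = p j},
          ∀ θ : ℝ, (θ : AddCircle π) = A p →
            width θ p.1 ≤ ρ * ⨅ φ : ℝ, width φ p.1 := by
  rintro ⟨ρ, hρ, A, hA, hAp⟩
  have h0n : 0 < n := by omega
  have h1n : 1 < n := by omega
  have h2n : 2 < n := by omega
  haveI : Nonempty (Fin n) := ⟨⟨0, h0n⟩⟩
  set i0 : Fin n := ⟨0, h0n⟩ with hi0
  set i1 : Fin n := ⟨1, h1n⟩ with hi1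
  set i2 : Fin n := ⟨2, h2n⟩ with hi2
  have hne01 : i0 ≠ i1 := by simp [hi0, hi1, Fin.ext_iff]
  have hne02 : i0 ≠ i2 := by simp [hi0, hi2, Fin.ext_iff]
  have hne12 : i1 ≠ i2 := by simp [hi1, hi2, Fin.ext_iff]
  set w : EuclideanSpace ℝ (Fin 2) := pt 0 1 with hw
  -- the homotopy of configurations
  set H : ℝ → ℝ → (Fin n → EuclideanSpace ℝ (Fin 2)) := fun s t i =>
    if i = i1 then (1 - clmp (2*s - 1)) • uvec t
    else if i = i2 then (2*(1 - clmp (2*s))) • uvec t + clmp (2*s) • w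
    else 0 with hH
  have hvalid : ∀ s t, ¬ ∀ i j, H s t i = H s t j := by
    intro s t hall
    have hHi0 : H s t i0 = 0 := by simp only [hH, if_neg hne01, if_neg hne02]
    by_cases hb : clmp (2*s - 1) = 1
    · have h1s : 1 ≤ 2*s - 1 := one_le_of_clmp_eq_one hb
      have ha : clmp (2*s) = 1 := clmp_of_one_le (by linarith)
      have : H s t i2 = w := by
        simp only [hH, if_neg hne12.symm, if_pos rfl, ha]
        rw [show (2*(1 - (1:ℝ))) = 0 by ring]
        simp
      have := (hall i2 i0).symm.trans this
      rw [hHi0] at this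
      exact w_ne_zero this.symm
    · have : H s t i1 = 0 := by rw [hall i1 i0, hHi0]
      simp only [hH, if_pos rfl] at this
      rcases smul_eq_zero.mp this with h | h
      · have : clmp (2*s - 1) = 1 := by linarith [sub_eq_zero.mp h]
        exact hb this
      · exact uvec_ne_zero t h
  set g : ℝ × ℝ → AddCircle π := fun q => A ⟨H q.1 q.2, hvalid q.1 q.2⟩ with hg
  have hHcont : Continuous fun q : ℝ × ℝ => H q.1 q.2 := by
    apply continuous_pi
    intro i
    simp only [hH]
    by_cases h1 : i = i1
    · simp only [if_pos h1]
      exact ((continuous_const.sub (continuous_clmp.comp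
        ((continuous_const.mul continuous_fst).sub continuous_const))).smul
        (continuous_uvec.comp continuous_snd))
    · simp only [if_neg h1]
      by_cases h2 : i = i2
      · simp only [if_pos h2]
        exact (((continuous_const.mul (continuous_const.sub (continuous_clmp.comp
          (continuous_const.mul continuous_fst)))).smul
          (continuous_uvec.comp continuous_snd)).add
          ((continuous_clmp.comp (continuous_const.mul continuous_fst)).smul
          continuous_const))
      · simp only [if_neg h2]
        exact continuous_const
  have hgcont : Continuous g := hA.comp (hHcont.subtype_mk _)
  have hper : ∀ s, g (s, 2*π) = g (s, 0) := by
    intro s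
    have : H s (2*π) = H s 0 := by
      funext i
      simp only [hH, uvec_two_pi]
    simp only [hg]
    congr 1
    exact Subtype.ext this
  -- the forced value at s = 0
  have hforce : ∀ t : ℝ, ((t : ℝ) : AddCircle π) = g (0, t) := by
    intro t
    set p : Fin n → EuclideanSpace ℝ (Fin 2) := H 0 t with hp
    set c : Fin n → ℝ := fun i => if i = i1 then 1 else if i = i2 then 2 else 0 with hc
    have hpc : ∀ i, p i = c i • uvec t := by
      intro i
      by_cases h1 : i = i1
      · simp only [hp, hc, hH, if_pos h1]
        rw [clmp_of_nonpos (by norm_num)]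
        norm_num
      · by_cases h2 : i = i2
        · simp only [hp, hc, hH, if_neg h1, if_pos h2]
          rw [show (2*(0:ℝ)) = 0 by ring, clmp_of_nonpos (le_refl 0)]
          rw [zero_smul, add_zero]
          norm_num
        · simp only [hp, hc, hH, if_neg h1, if_neg h2]
          rw [zero_smul]
    have hwnn : ∀ θ : ℝ, ∀ q : Fin n → EuclideanSpace ℝ (Fin 2), 0 ≤ width θ q :=
      fun θ q => Real.iSup_nonneg fun ij => abs_nonneg _
    have hbdd : ∀ θ : ℝ, BddAbove (Set.range fun ij : Fin n × Fin n =>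
        |⟪p ij.1 - p ij.2, pt (-Real.sin θ) (Real.cos θ)⟫|) :=
      fun θ => (Set.finite_range _).bddAbove
    have hw0 : width t p = 0 := by
      rw [width]
      have : (fun ij : Fin n × Fin n =>
          |⟪p ij.1 - p ij.2, pt (-Real.sin t) (Real.cos t)⟫|) = fun _ => 0 := by
        funext ij
        rw [hpc ij.1, hpc ij.2, ← sub_smul, real_inner_smul_left, inner_uvec,
          sub_self, Real.sin_zero, mul_zero, abs_zero]
      rw [this]
      exact ciSup_const
    have hinf : (⨅ φ : ℝ, width φ p) = 0 := by
      apply le_antisymm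
      · have : (⨅ φ : ℝ, width φ p) ≤ width t p :=
          ciInf_le ⟨0, fun x ⟨φ, hφ⟩ => hφ ▸ hwnn φ p⟩ t
        rwa [hw0] at this
      · exact le_ciInf fun φ => hwnn φ p
    obtain ⟨θ, hθ⟩ : ∃ θ : ℝ, (θ : AddCircle π) = A ⟨p, hvalid 0 t⟩ :=
      ⟨_, QuotientAddGroup.out_eq' _⟩
    have hble := hAp ⟨p, hvalid 0 t⟩ θ hθ
    rw [hinf, mul_zero] at hble
    have hterm : |⟪p i0 - p i1, pt (-Real.sin θ) (Real.cos θ)⟫| ≤ width θ p :=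
      le_ciSup (hbdd θ) (i0, i1)
    have hterm0 : |⟪p i0 - p i1, pt (-Real.sin θ) (Real.cos θ)⟫| ≤ 0 :=
      le_trans hterm hble
    have hc0 : c i0 = 0 := by simp only [hc, if_neg hne01, if_neg hne02]
    have hc1 : c i1 = 1 := by simp only [hc, if_pos rfl]
    rw [hpc i0, hpc i1, ← sub_smul, real_inner_smul_left, inner_uvec, hc0, hc1] at hterm0
    have hsin : Real.sin (t - θ) = 0 := by
      have := abs_nonpos_iff.mp hterm0
      have habs : Real.sin (t - θ) = -((0 - 1) * Real.sin (t - θ)) := by ring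
      rw [habs, this, neg_zero]
    rw [coe_eq_of_sin_eq_zero hsin, hθ]
  -- constancy at s = 1
  have hg1 : ∀ t, g (1, t) = g (1, 0) := by
    intro t
    have : H 1 t = H 1 0 := by
      funext i
      have hb1 : clmp (2*(1:ℝ) - 1) = 1 := clmp_of_one_le (by norm_num)
      have ha1 : clmp (2*(1:ℝ)) = 1 := clmp_of_one_le (by norm_num)
      simp only [hH, hb1, ha1]
      norm_num
    simp only [hg]
    congr 1
    exact Subtype.ext this
  -- winding numbers
  have h2πpos : (0:ℝ) ≤ 2*π := by positivity
  have hlifts : ∀ s : ℝ, ∃ l : ℝ → ℝ, Continuous l ∧ l 0 = sec 0 (g (s, 0)) ∧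
      ∀ t ∈ Icc (0:ℝ) (2*π), ((l t : ℝ) : AddCircle π) = g (s, t) := by
    intro s
    exact exists_lift (fun t => g (s, t))
      (hgcont.comp (continuous_const.prodMk continuous_id)) 0 (2*π) h2πpos
      (sec 0 (g (s, 0))) (coe_sec 0 _)
  set W : ℝ → ℝ := fun s => (Classical.choose (hlifts s)) (2*π) -
    (Classical.choose (hlifts s)) 0 with hW
  have hmem0 : (0:ℝ) ∈ Icc (0:ℝ) (2*π) := ⟨le_refl 0, h2πpos⟩
  have hmem2π : (2*π : ℝ) ∈ Icc (0:ℝ) (2*π) := ⟨h2πpos, le_refl _⟩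
  have wspec : ∀ s : ℝ, ∀ m : ℝ → ℝ, ContinuousOn m (Icc (0:ℝ) (2*π)) →
      (∀ t ∈ Icc (0:ℝ) (2*π), ((m t : ℝ) : AddCircle π) = g (s, t)) →
      W s = m (2*π) - m 0 := by
    intro s m hmc hml
    obtain ⟨hlc, hl0, hll⟩ := Classical.choose_spec (hlifts s)
    set l := Classical.choose (hlifts s)
    have := lift_rigid isPreconnected_Icc hlc.continuousOn hmc
      (fun t ht => (hll t ht).trans (hml t ht).symm) hmem2π hmem0
    simp only [hW]
    linarith [this]
  have hW0 : W 0 = 2*π := by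
    have := wspec 0 id continuous_id.continuousOn (fun t _ => hforce t)
    simpa using this
  have hW1 : W 1 = 0 := by
    have := wspec 1 (fun _ => sec 0 (g (1, 0))) continuousOn_const
      (fun t _ => (coe_sec 0 _).trans (hg1 t).symm)
    simpa using this
  -- local constancy of W
  have hloc : ∀ s₀ : ℝ, ∃ U : Set ℝ, IsOpen U ∧ s₀ ∈ U ∧ ∀ s ∈ U, W s = W s₀ := by
    intro s₀
    obtain ⟨hlc, hl0, hll⟩ := Classical.choose_spec (hlifts s₀)
    set l := Classical.choose (hlifts s₀) with hldef
    set Φ : (Icc (0:ℝ) (2*π)) × ℝ → AddCircle π :=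
      fun q => g (q.2, (q.1 : ℝ)) - (((l q.1 : ℝ)) : AddCircle π) with hΦ
    have hΦc : Continuous Φ := by
      apply Continuous.sub
      · exact hgcont.comp (continuous_snd.prodMk (continuous_subtype_val.comp continuous_fst))
      · exact continuous_quotient_mk'.comp
          ((hlc.comp continuous_subtype_val).comp continuous_fst)
    set U : Set ℝ := (Prod.snd '' (Φ ⁻¹' {((π/2 : ℝ) : AddCircle π)}))ᶜ with hU
    have hUopen : IsOpen U :=
      (isClosedMap_snd_of_compactSpace _ (isClosed_singleton.preimage hΦc)).isOpen_compl
    have hs₀U : s₀ ∈ U := by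
      rintro ⟨q, hq, hq2⟩
      rw [Set.mem_preimage, Set.mem_singleton_iff] at hq
      have : Φ q = 0 := by
        rw [hΦ]
        simp only
        rw [hq2, hll (q.1 : ℝ) q.1.2, sub_self]
      rw [this] at hq
      exact half_pi_ne_zero hq.symm
    refine ⟨U, hUopen, hs₀U, ?_⟩
    intro s hs
    set δ : ℝ → ℝ := fun t => sec (-(π/2)) (g (s, t) - ((l t : ℝ) : AddCircle π)) with hδ
    have hδcont : ∀ t ∈ Icc (0:ℝ) (2*π), ContinuousAt δ t := by
      intro t ht
      have hx : g (s, t) - ((l t : ℝ) : AddCircle π) ≠ ((-(π/2) : ℝ) : AddCircle π) := by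
        rw [neg_half_pi_eq]
        intro hcon
        exact hs ⟨(⟨t, ht⟩, s), by rw [Set.mem_preimage, Set.mem_singleton_iff]; exact hcon, rfl⟩
      have hinner : ContinuousAt (fun t : ℝ => g (s, t) - ((l t : ℝ) : AddCircle π)) t :=
        ((hgcont.comp (continuous_const.prodMk continuous_id)).continuousAt.sub
          (continuous_quotient_mk'.comp hlc).continuousAt)
      have hcomp : ContinuousAt
          (sec (-(π/2)) ∘ fun t : ℝ => g (s, t) - ((l t : ℝ) : AddCircle π)) t :=
        ContinuousAt.comp (continuousAt_sec _ hx) hinner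
      exact hcomp
    set m : ℝ → ℝ := fun t => l t + δ t with hm
    have hmc : ContinuousOn m (Icc (0:ℝ) (2*π)) :=
      hlc.continuousOn.add fun t ht => (hδcont t ht).continuousWithinAt
    have hml : ∀ t ∈ Icc (0:ℝ) (2*π), ((m t : ℝ) : AddCircle π) = g (s, t) := by
      intro t _
      rw [hm]
      simp only
      rw [AddCircle.coe_add, hδ]
      simp only
      rw [coe_sec]
      abel
    have hWs : W s = m (2*π) - m 0 := wspec s m hmc hml
    have hWs₀ : W s₀ = l (2*π) - l 0 := wspec s₀ l hlc.continuousOn hll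
    have hd : δ (2*π) - δ 0 = 0 := by
      have hcoe : ((δ (2*π) - δ 0 : ℝ) : AddCircle π) = 0 := by
        rw [AddCircle.coe_sub, hδ]
        simp only
        rw [coe_sec, coe_sec]
        have e1 : g (s, 2*π) = g (s, 0) := hper s
        have e2 : ((l (2*π) : ℝ) : AddCircle π) = ((l 0 : ℝ) : AddCircle π) := by
          rw [hll (2*π) hmem2π, hll 0 hmem0, hper s₀]
        rw [e1, e2, sub_self]
      obtain ⟨k, hk⟩ := (AddCircle.coe_eq_zero_iff π).mp hcoe
      apply int_zero_of_small k hk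
      have b1 := sec_mem (-(π/2)) (g (s, 2*π) - ((l (2*π) : ℝ) : AddCircle π))
      have b2 := sec_mem (-(π/2)) (g (s, 0) - ((l 0 : ℝ) : AddCircle π))
      rw [abs_lt]
      constructor
      · have h1 := b1.1
        have h2 := b2.2
        simp only [hδ]
        linarith [Real.pi_pos]
      · have h1 := b1.2
        have h2 := b2.1
        simp only [hδ]
        linarith [Real.pi_pos]
    rw [hWs, hWs₀, hm]
    simp only
    linarith [hd]
  -- conclude
  set E : Set ℝ := {s | W s = W 0} with hE
  have hEopen : IsOpen E := by
    rw [isOpen_iff_mem_nhds]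
    intro s hs
    obtain ⟨U, hUo, hsU, hUc⟩ := hloc s
    exact Filter.mem_of_superset (hUo.mem_nhds hsU) fun s' hs' => (hUc s' hs').trans hs
  have hEclosed : IsClosed E := by
    rw [← isOpen_compl_iff, isOpen_iff_mem_nhds]
    intro s hs
    obtain ⟨U, hUo, hsU, hUc⟩ := hloc s
    exact Filter.mem_of_superset (hUo.mem_nhds hsU)
      fun s' hs' (hc : W s' = W 0) => hs ((hUc s' hs').symm.trans hc)
  have hEuniv : E = univ := IsClopen.eq_univ ⟨hEclosed, hEopen⟩ ⟨0, rfl⟩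
  have h1E : (1:ℝ) ∈ E := hEuniv ▸ mem_univ 1
  rw [hE, mem_setOf_eq, hW1, hW0] at h1E
  linarith [Real.pi_pos]

end
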